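/- A ring R is left Q-copure split if and only if every Q-copure left ideal of R is Q-copure Baer injective (as an R-module). -/

import Mathlib

universe u

variable {R : Type u}

/-- A linear map `f : A → B` is `Q`-copure if every module in `Q` is injective
relative to `f`. -/
def IsCopure [Ring R] (Q : ModuleCat.{u} R → Prop) {A B : Type u}
    [AddCommGroup A] [Module R A] [AddCommGroup B] [Module R B] (f : A →ₗ[R] B) : Prop :=
  ∀ M : ModuleCat.{u} R, Q M → ∀ g : A →ₗ[R] M, ∃ h : B →ₗ[R] M, ∀ a : A, h (f a) = g a

/-- A left ideal `I` of `R` is `Q`-copure if every module in `Q` is injective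
relative to the inclusion `I → R`. -/
def CopureIdeal [Ring R] (Q : ModuleCat.{u} R → Prop) (I : Ideal R) : Prop :=
  ∀ M : ModuleCat.{u} R, Q M → ∀ g : I →ₗ[R] M, ∃ h : R →ₗ[R] M, ∀ x : I, h x = g x

/-- `N` is `Q`-copure Baer injective if every homomorphism from a `Q`-copure
left ideal of `R` into `N` extends to `R`. -/
def CopureBaerInjective [Ring R] (Q : ModuleCat.{u} R → Prop) (N : Type*)
    [AddCommGroup N] [Module R N] : Prop :=
  ∀ I : Ideal R, CopureIdeal Q I → ∀ g : I →ₗ[R] N, ∃ h : R →ₗ[R] N, ∀ x : I, h x = g x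

theorem copureSplit_iff_copureIdeals_copureBaerInjective [Ring R]
    (Q : ModuleCat.{u} R → Prop) :
    (∀ I : Ideal R, CopureIdeal Q I → ∃ J : Ideal R, IsCompl I J) ↔
      ∀ I : Ideal R, CopureIdeal Q I → CopureBaerInjective Q I := by
  constructor
  · intro hsplit I _ I' hI' g
    obtain ⟨J, hJ⟩ := hsplit I' hI'
    refine ⟨g ∘ₗ (I'.projectionOnto J hJ), fun x => ?_⟩
    simp [Submodule.projectionOnto_apply_left hJ x]
  · intro hbaer I hI
    obtain ⟨h, hh⟩ := hbaer I hI I hI LinearMap.id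
    -- e : R →ₗ[R] R, e x = h x as element of R, idempotent with range in I
    set e : R →ₗ[R] R := I.subtype ∘ₗ h with he
    have heI : ∀ x : R, e x ∈ I := fun x => (h x).2
    have heid : ∀ x : R, x ∈ I → e x = x := by
      intro x hx
      have := hh ⟨x, hx⟩
      simp only [he, LinearMap.comp_apply, Submodule.subtype_apply]
      rw [this]; rfl
    refine ⟨LinearMap.ker e, ?_⟩
    constructor
    · rw [disjoint_iff]
      ext x
      simp only [Submodule.mem_inf, LinearMap.mem_ker, Submodule.mem_bot]
      constructor
      · rintro ⟨hx, hx0⟩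
        rw [← heid x hx, hx0]
      · rintro rfl; simp
    · rw [codisjoint_iff, eq_top_iff]
      intro x _
      refine Submodule.mem_sup.2 ⟨e x, heI x, x - e x, ?_, by abel⟩
      simp only [LinearMap.mem_ker, map_sub]
      rw [heid (e x) (heI x), sub_self]
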